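/- Let Φ denote the standard Gaussian CDF and Φ' its density. For any fixed s₀ > 0, the integral ∫_0^∞ Φ'(z)² / (Φ(z + s₀) − Φ(z)) dz is finite. -/
import Mathlib


open MeasureTheory Real Set Filter Topology

/-- Standard Gaussian density Φ'. -/
noncomputable def gaussPdf (z : ℝ) : ℝ := (Real.sqrt (2 * Real.pi))⁻¹ * Real.exp (-z ^ 2 / 2)

/-- Standard Gaussian CDF Φ. -/
noncomputable def gaussCdf (z : ℝ) : ℝ := ∫ u in Set.Iic z, gaussPdf u

lemma gaussPdf_pos (z : ℝ) : 0 < gaussPdf z := by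
  unfold gaussPdf
  positivity

lemma gaussPdf_cont : Continuous gaussPdf := by
  unfold gaussPdf
  continuity

lemma gaussPdf_integrable : Integrable gaussPdf := by
  have h : Integrable (fun z : ℝ => Real.exp (-(1/2 : ℝ) * z ^ 2)) :=
    integrable_exp_neg_mul_sq (by norm_num)
  have h2 := h.const_mul (Real.sqrt (2 * Real.pi))⁻¹
  have he : gaussPdf
      = fun z : ℝ => (Real.sqrt (2 * Real.pi))⁻¹ * Real.exp (-(1/2 : ℝ) * z ^ 2) := by
    funext z; unfold gaussPdf; congr 1; ring
  rw [he]; exact h2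

lemma gaussCdf_sub (a b : ℝ) : gaussCdf b - gaussCdf a = ∫ x in a..b, gaussPdf x := by
  unfold gaussCdf
  rw [intervalIntegral.integral_Iic_sub_Iic gaussPdf_integrable.integrableOn
    gaussPdf_integrable.integrableOn]

lemma gaussCdf_cont : Continuous gaussCdf := by
  have h := gaussPdf_integrable.continuous_primitive 0
  have : ∀ z, gaussCdf z = gaussCdf 0 + ∫ x in (0:ℝ)..z, gaussPdf x := by
    intro z; rw [← gaussCdf_sub]; ring
  rw [funext this]
  exact continuous_const.add h

lemma gaussPdf_anti {x y : ℝ} (hx : 0 ≤ x) (hxy : x ≤ y) : gaussPdf y ≤ gaussPdf x := by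
  unfold gaussPdf
  have : Real.exp (-y ^ 2 / 2) ≤ Real.exp (-x ^ 2 / 2) := by
    apply Real.exp_le_exp.mpr
    nlinarith
  have hc : (0:ℝ) ≤ (Real.sqrt (2 * Real.pi))⁻¹ := by positivity
  nlinarith

theorem stmt7 (s₀ : ℝ) (hs₀ : 0 < s₀) :
    IntegrableOn (fun z => gaussPdf z ^ 2 / (gaussCdf (z + s₀) - gaussCdf z))
      (Set.Ioi (0 : ℝ)) := by
  set c : ℝ := (Real.sqrt (2 * Real.pi))⁻¹ with hc
  have hcpos : 0 < c := by positivity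
  -- dominating function
  set G : ℝ → ℝ := fun z => (c / s₀ * Real.exp (s₀ ^ 2)) * Real.exp (-(1/2 : ℝ) * (z - s₀) ^ 2)
    with hG
  have hGint : Integrable G := by
    have h : Integrable (fun z : ℝ => Real.exp (-(1/2 : ℝ) * z ^ 2)) :=
      integrable_exp_neg_mul_sq (by norm_num)
    have h2 : Integrable (fun z : ℝ => Real.exp (-(1/2 : ℝ) * (z - s₀) ^ 2)) := by
      have := h.comp_sub_right s₀
      exact this
    exact h2.const_mul _
  -- denominator positivity
  have hdenom : ∀ z : ℝ, 0 < gaussCdf (z + s₀) - gaussCdf z := by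
    intro z
    rw [gaussCdf_sub]
    exact intervalIntegral.intervalIntegral_pos_of_pos
      gaussPdf_integrable.intervalIntegrable gaussPdf_pos (by linarith)
  -- continuity of f
  have hfcont : Continuous (fun z => gaussPdf z ^ 2 / (gaussCdf (z + s₀) - gaussCdf z)) := by
    apply Continuous.div
    · exact (gaussPdf_cont.pow 2)
    · exact (gaussCdf_cont.comp (continuous_id.add continuous_const)).sub gaussCdf_cont
    · intro z; exact (hdenom z).ne'
  -- lower bound on denominator for z > 0
  have hlow : ∀ z : ℝ, 0 < z → s₀ * gaussPdf (z + s₀) ≤ gaussCdf (z + s₀) - gaussCdf z := by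
    intro z hz
    rw [gaussCdf_sub]
    have h1 : ∫ _x in z..(z + s₀), gaussPdf (z + s₀) ≤ ∫ x in z..(z + s₀), gaussPdf x := by
      apply intervalIntegral.integral_mono_on (by linarith)
        intervalIntegrable_const gaussPdf_integrable.intervalIntegrable
      intro x hx
      exact gaussPdf_anti (by linarith [hx.1]) hx.2
    simpa using h1
  -- key pointwise bound
  have hbound : ∀ z : ℝ, 0 < z →
      gaussPdf z ^ 2 / (gaussCdf (z + s₀) - gaussCdf z) ≤ G z := by
    intro z hz
    have hspos : 0 < s₀ * gaussPdf (z + s₀) := mul_pos hs₀ (gaussPdf_pos _)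
    have step1 : gaussPdf z ^ 2 / (gaussCdf (z + s₀) - gaussCdf z)
        ≤ gaussPdf z ^ 2 / (s₀ * gaussPdf (z + s₀)) :=
      div_le_div_of_nonneg_left (by positivity) hspos (hlow z hz)
    refine step1.trans (le_of_eq ?_)
    rw [div_eq_iff hspos.ne', hG]
    simp only
    unfold gaussPdf
    rw [← hc, mul_pow, ← Real.exp_nat_mul]
    field_simp
    ring_nf
    simp only [mul_assoc, ← Real.exp_add]
    ring_nf
  -- conclude
  refine Integrable.mono' hGint.integrableOn
    (hfcont.aestronglyMeasurable.restrict) ?_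
  filter_upwards [ae_restrict_mem measurableSet_Ioi] with z hz
  rw [Real.norm_eq_abs, abs_of_nonneg (div_nonneg (by positivity) (hdenom z).le)]
  exact hbound z hz
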